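/- For all integers n, k, d with n ≥ k > d ≥ 1, every family of n axis-parallel boxes in ℝ^d with the property that no k+1 of the boxes have a point in common has at most Ψ(n, k, d) = t(n-k+d, d) + C(n,2) - C(n-k+d, 2) intersecting pairs. -/

import Mathlib

/-- Number of edges of the Turán graph `𝒯(n, m)`, the complete `m`-partite graph on `n`
vertices whose vertex-class sizes are as equal as possible. -/
noncomputable def turanEdges (n m : ℕ) : ℕ :=
  (SimpleGraph.turanGraph n m).edgeFinset.card

/-- `S ⊆ ℝ^d` is an axis-parallel box: a product `∏ᵢ [aᵢ, bᵢ]` with `aᵢ ≤ bᵢ`. -/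
def IsBox {d : ℕ} (S : Set (Fin d → ℝ)) : Prop :=
  ∃ a b : Fin d → ℝ, (∀ i, a i ≤ b i) ∧
    S = Set.pi Set.univ (fun i => Set.Icc (a i) (b i))

/-- Number of intersecting pairs of an indexed family of sets: the number of unordered
pairs `{i, j}` with `i ≠ j` and `B i ∩ B j ≠ ∅`. -/
noncomputable def interPairs {n : ℕ} {α : Type*} (B : Fin n → Set α) : ℕ :=
  Set.ncard {p : Fin n × Fin n | p.1 < p.2 ∧ (B p.1 ∩ B p.2).Nonempty}

open Finset

noncomputable def pairCount {N : ℕ} (A : Fin N → Fin N → Prop) : ℕ :=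
  Set.ncard {p : Fin N × Fin N | p.1 < p.2 ∧ A p.1 p.2}

lemma interPairs_eq_pairCount {n : ℕ} {α : Type*} (B : Fin n → Set α) :
    interPairs B = pairCount (fun i j => (B i ∩ B j).Nonempty) := rfl

open scoped Classical in
lemma pairCount_eq_filter {N : ℕ} (A : Fin N → Fin N → Prop) :
    pairCount A
      = (Finset.univ.filter fun p : Fin N × Fin N => p.1 < p.2 ∧ A p.1 p.2).card := by
  rw [pairCount, ← Set.ncard_coe_finset]
  congr 1
  ext p
  simp

lemma pairCount_le_of_imp {N : ℕ} {A A' : Fin N → Fin N → Prop}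
    (h : ∀ i j, i < j → A i j → A' i j) : pairCount A ≤ pairCount A' := by
  apply Set.ncard_le_ncard _ (Set.toFinite _)
  rintro ⟨i, j⟩ ⟨hij, hA⟩
  exact ⟨hij, h i j hij hA⟩

lemma pairCount_congr {N : ℕ} {A A' : Fin N → Fin N → Prop}
    (h : ∀ i j, i < j → (A i j ↔ A' i j)) : pairCount A = pairCount A' := by
  unfold pairCount
  congr 1
  ext p
  exact and_congr_right fun hij => h _ _ hij

lemma edge_card_eq {N : ℕ} (G : SimpleGraph (Fin N)) [Fintype G.edgeSet] :
    G.edgeFinset.card = pairCount G.Adj := by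
  classical
  rw [pairCount_eq_filter]
  symm
  refine Finset.card_bij (fun (p : Fin N × Fin N) _ => s(p.1, p.2)) ?_ ?_ ?_
  · intro p hp
    simp only [mem_filter, mem_univ, true_and] at hp
    simpa [SimpleGraph.mem_edgeFinset] using hp.2
  · intro p hp q hq h
    simp only [mem_filter, mem_univ, true_and] at hp hq
    rw [Sym2.mk_eq_mk_iff] at h
    rcases h with h | h
    · exact h
    · exfalso
      have h1 : p.1 = q.2 := (Prod.ext_iff.1 h).1
      have h2 : p.2 = q.1 := (Prod.ext_iff.1 h).2
      have := hp.1
      rw [h1, h2] at this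
      exact absurd (this.trans hq.1) (lt_irrefl _)
  · intro e he
    induction e using Sym2.ind with
    | _ a b =>
      rw [SimpleGraph.mem_edgeFinset, SimpleGraph.mem_edgeSet] at he
      rcases lt_or_gt_of_ne he.ne with h | h
      · exact ⟨(a, b), by simp [h, he], rfl⟩
      · exact ⟨(b, a), by simp [h, he.symm], Sym2.eq_swap⟩

lemma pairCount_ne (N : ℕ) :
    pairCount (fun i j : Fin N => i ≠ j) = N.choose 2 := by
  classical
  have h := edge_card_eq (⊤ : SimpleGraph (Fin N))
  rw [SimpleGraph.card_edgeFinset_top_eq_card_choose_two, Fintype.card_fin] at h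
  rw [h]
  exact pairCount_congr fun i j _ => Iff.rfl

lemma turanGraph_adj {n r : ℕ} {v w : Fin n} :
    (SimpleGraph.turanGraph n r).Adj v w ↔ (v : ℕ) % r ≠ (w : ℕ) % r := Iff.rfl

lemma card_range_mod (d : ℕ) (hd : 0 < d) :
    ∀ m, ((Finset.range m).filter fun u => u % d = m % d).card = m / d := by
  intro m
  induction m using Nat.strong_induction_on with
  | _ m ih =>
    rcases lt_or_ge m d with h | h
    · rw [Nat.div_eq_of_lt h, Finset.card_eq_zero, Finset.filter_eq_empty_iff]
      intro u hu
      rw [Finset.mem_range] at hu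
      rw [Nat.mod_eq_of_lt (hu.trans h), Nat.mod_eq_of_lt h]
      omega
    · have hme : (m - d) % d = m % d := (Nat.mod_eq_sub_mod h).symm
      have hkey : (Finset.range m).filter (fun u => u % d = m % d)
          = insert (m % d)
              (((Finset.range (m - d)).filter fun u => u % d = (m - d) % d).image (· + d)) := by
        ext u
        simp only [Finset.mem_filter, Finset.mem_range, Finset.mem_insert, Finset.mem_image]
        constructor
        · rintro ⟨hum, humod⟩
          rcases lt_or_ge u d with hud | hud
          · left
            rw [← humod, Nat.mod_eq_of_lt hud]
          · right
            refine ⟨u - d, ⟨⟨by omega, ?_⟩, by omega⟩⟩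
            rw [hme, ← humod, Nat.mod_eq_sub_mod hud]
        · rintro (rfl | ⟨u', ⟨⟨hu'lt, hu'mod⟩, rfl⟩⟩)
          · exact ⟨lt_of_lt_of_le (Nat.mod_lt m hd) h, Nat.mod_mod_of_dvd m dvd_rfl⟩
          · refine ⟨by omega, ?_⟩
            rw [Nat.add_mod_right, hu'mod, hme]
      rw [hkey, Finset.card_insert_of_notMem, Finset.card_image_of_injective _ (add_left_injective d)]
      · rw [ih (m - d) (by omega)]
        rw [Nat.div_eq_sub_div hd h]
      · intro hmem
        simp only [Finset.mem_image, Finset.mem_filter, Finset.mem_range] at hmem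
        obtain ⟨u', -, hu'⟩ := hmem
        have := Nat.mod_lt m hd
        omega

lemma card_fin_mod (d m : ℕ) :
    ((Finset.univ : Finset (Fin m)).filter fun u => u.val % d = m % d).card
      = ((Finset.range m).filter fun u => u % d = m % d).card := by
  have himg : ((Finset.range m).filter fun u => u % d = m % d)
      = ((Finset.univ : Finset (Fin m)).filter fun u => u.val % d = m % d).image Fin.val := by
    ext u
    simp only [Finset.mem_filter, Finset.mem_range, Finset.mem_image, Finset.mem_univ, true_and]
    constructor
    · rintro ⟨hum, humod⟩
      exact ⟨⟨u, hum⟩, humod, rfl⟩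
    · rintro ⟨v, hv, rfl⟩
      exact ⟨v.isLt, hv⟩
  rw [himg, Finset.card_image_of_injective _ Fin.val_injective]

open scoped Classical in
lemma turan_succ (m d : ℕ) (hd : 0 < d) :
    turanEdges (m + 1) d = turanEdges m d + (m - m / d) := by
  have hmodcard : ((Finset.univ : Finset (Fin m)).filter fun u => u.val % d = m % d).card
      = m / d := by
    rw [card_fin_mod, card_range_mod d hd]
  have hTcard : ((Finset.univ : Finset (Fin m)).filter fun u => ¬ u.val % d = m % d).card
      = m - m / d := by
    have h := Finset.card_filter_add_card_filter_not
      (s := (Finset.univ : Finset (Fin m))) (p := fun u => u.val % d = m % d)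
    rw [Finset.card_univ, Fintype.card_fin, hmodcard] at h
    have hle : m / d ≤ m := Nat.div_le_self m d
    omega
  rw [turanEdges, turanEdges, edge_card_eq, edge_card_eq,
      pairCount_eq_filter, pairCount_eq_filter,
      ← Finset.card_filter_add_card_filter_not
        (p := fun p : Fin (m+1) × Fin (m+1) => ¬ p.2 = Fin.last m)]
  congr 1
  · -- pairs not involving the last vertex
    refine (Finset.card_bij
      (fun (q : Fin m × Fin m) _ =>
        ((Fin.castSucc q.1, Fin.castSucc q.2) : Fin (m+1) × Fin (m+1))) ?_ ?_ ?_).symm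
    · intro q hq
      simp only [Finset.mem_filter, Finset.mem_univ, true_and] at hq ⊢
      obtain ⟨hlt, hadj⟩ := hq
      refine ⟨⟨(Fin.castSucc_lt_castSucc_iff).2 hlt, ?_⟩, ?_⟩
      · rw [turanGraph_adj] at hadj ⊢
        simpa [Fin.coe_castSucc] using hadj
      · exact ne_of_lt (Fin.castSucc_lt_last q.2)
    · intro q _ r _ h
      rw [Prod.ext_iff] at h ⊢
      exact ⟨Fin.castSucc_injective _ h.1, Fin.castSucc_injective _ h.2⟩
    · intro p hp
      simp only [Finset.mem_filter, Finset.mem_univ, true_and] at hp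
      obtain ⟨⟨hlt, hadj⟩, hp2⟩ := hp
      have hval2 : p.2.val < m := by
        rcases Nat.lt_or_ge p.2.val m with h | h
        · exact h
        · exfalso
          apply hp2
          apply Fin.ext
          have := p.2.isLt
          simp only [Fin.val_last]
          omega
      have hval1 : p.1.val < m := by
        have := Fin.lt_def.1 hlt
        omega
      refine ⟨(⟨p.1.val, hval1⟩, ⟨p.2.val, hval2⟩), ?_, ?_⟩
      · simp only [Finset.mem_filter, Finset.mem_univ, true_and]
        refine ⟨?_, ?_⟩
        · rw [Fin.lt_def]
          exact Fin.lt_def.1 hlt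
        · rw [turanGraph_adj] at hadj ⊢
          simpa using hadj
      · rw [Prod.ext_iff]
        exact ⟨Fin.ext (by simp), Fin.ext (by simp)⟩
  · -- pairs involving the last vertex
    rw [← hTcard]
    refine (Finset.card_bij
      (fun (u : Fin m) _ => ((Fin.castSucc u, Fin.last m) : Fin (m+1) × Fin (m+1)))
      ?_ ?_ ?_).symm
    · intro u hu
      simp only [Finset.mem_filter, Finset.mem_univ, true_and, not_not] at hu ⊢
      refine ⟨⟨Fin.castSucc_lt_last u, ?_⟩, trivial⟩
      rw [turanGraph_adj]
      simpa [Fin.coe_castSucc, Fin.val_last] using hu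
    · intro u _ v _ h
      exact Fin.castSucc_injective _ (Prod.ext_iff.1 h).1
    · intro p hp
      simp only [Finset.mem_filter, Finset.mem_univ, true_and, not_not] at hp
      obtain ⟨⟨hlt, hadj⟩, hp2⟩ := hp
      have hval : p.1.val < m := by
        rw [hp2] at hlt
        simpa [Fin.lt_def, Fin.val_last] using hlt
      refine ⟨⟨p.1.val, hval⟩, ?_, ?_⟩
      · simp only [Finset.mem_filter, Finset.mem_univ, true_and]
        rw [turanGraph_adj, hp2] at hadj
        simpa [Fin.val_last] using hadj
      · rw [Prod.ext_iff]
        exact ⟨Fin.ext (by simp), hp2.symm⟩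

lemma turan_self (d : ℕ) : turanEdges d d = d.choose 2 := by
  rw [turanEdges, edge_card_eq, ← pairCount_ne d]
  apply pairCount_congr
  intro i j _
  rw [turanGraph_adj]
  rw [Nat.mod_eq_of_lt i.isLt, Nat.mod_eq_of_lt j.isLt]
  constructor
  · intro h hij
    exact h (by rw [hij])
  · intro h hv
    exact h (Fin.ext hv)

def nonNbrSet {n : ℕ} {α : Type*} (B : Fin n → Set α) (v : Fin n) : Set (Fin n) :=
  {j | j ≠ v ∧ ¬ (B j ∩ B v).Nonempty}

open scoped Classical in
lemma exists_low_degree {n k d : ℕ} (hd : 1 ≤ d) (hkn : k ≤ n)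
    (B : Fin (n+1) → Set (Fin d → ℝ)) (hbox : ∀ i, IsBox (B i))
    (hcap : ∀ x : Fin d → ℝ, Set.ncard {i | x ∈ B i} ≤ k) :
    ∃ v : Fin (n+1), (n - k + d) / d ≤ (nonNbrSet B v).ncard := by
  classical
  by_contra hcon
  push_neg at hcon
  set m := n - k + d with hm
  have hdm : d ≤ m := by omega
  have hq1 : 1 ≤ m / d := (Nat.one_le_div_iff (by omega)).2 hdm
  have hq2 : d * (m / d) ≤ m := by
    rw [Nat.mul_comm]
    exact Nat.div_mul_le_self m d
  choose a b hab hBeq using hbox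
  have hvex : ∀ i : Fin d, ∃ v : Fin (n+1), ∀ w, b v i ≤ b w i := by
    intro i
    obtain ⟨v, -, hvm⟩ :=
      Finset.exists_min_image Finset.univ (fun v => b v i) ⟨0, Finset.mem_univ 0⟩
    exact ⟨v, fun w => hvm w (Finset.mem_univ w)⟩
  choose v hv using hvex
  set x : Fin d → ℝ := fun i => b (v i) i with hxdef
  have hmem : ∀ (j : Fin (n+1)) (y : Fin d → ℝ), y ∈ B j ↔ ∀ i, a j i ≤ y i ∧ y i ≤ b j i := by
    intro j y
    rw [hBeq j]
    constructor
    · intro hy i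
      simpa [Set.mem_Icc] using hy i (Set.mem_univ i)
    · intro hy i _
      simpa [Set.mem_Icc] using hy i
  have hsub : (Finset.univ.filter fun j : Fin (n+1) => x ∉ B j)
      ⊆ Finset.univ.biUnion fun i : Fin d =>
          Finset.univ.filter fun j : Fin (n+1) => j ∈ nonNbrSet B (v i) := by
    intro j hj
    rw [Finset.mem_filter] at hj
    have hex : ∃ i, ¬ (a j i ≤ x i ∧ x i ≤ b j i) := by
      by_contra hc
      push_neg at hc
      exact hj.2 ((hmem j x).2 fun i => ⟨(hc i).1, (hc i).2⟩)
  -- note: push_neg form may differ; fix in iteration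
    obtain ⟨i, hi⟩ := hex
    have hxle : x i ≤ b j i := hv i j
    have hagt : b (v i) i < a j i := by
      rcases not_and_or.1 hi with h | h
      · exact lt_of_not_ge h
      · exact absurd hxle h
    refine Finset.mem_biUnion.2 ⟨i, Finset.mem_univ i, ?_⟩
    rw [Finset.mem_filter]
    refine ⟨Finset.mem_univ j, ?_, ?_⟩
    · rintro rfl
      exact absurd (hab (v i) i) (not_le.2 hagt)
    · rintro ⟨y, hy1, hy2⟩
      have h1 := ((hmem j y).1 hy1) i
      have h2 := ((hmem (v i) y).1 hy2) i
      linarith [h1.1, h2.2, hagt]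
  have hcard1 : ((Finset.univ : Finset (Fin (n+1))).filter fun j => x ∉ B j).card ≤ n - k := by
    calc ((Finset.univ : Finset (Fin (n+1))).filter fun j => x ∉ B j).card
        ≤ (Finset.univ.biUnion fun i : Fin d =>
            Finset.univ.filter fun j : Fin (n+1) => j ∈ nonNbrSet B (v i)).card :=
          Finset.card_le_card hsub
      _ ≤ ∑ i : Fin d, (Finset.univ.filter fun j : Fin (n+1) => j ∈ nonNbrSet B (v i)).card :=
          Finset.card_biUnion_le
      _ ≤ ∑ _i : Fin d, (m / d - 1) := by
          apply Finset.sum_le_sum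
          intro i _
          have hcon' := hcon (v i)
          have heq : (Finset.univ.filter fun j : Fin (n+1) => j ∈ nonNbrSet B (v i)).card
              = (nonNbrSet B (v i)).ncard := by
            rw [← Set.ncard_coe_finset]
            congr 1
            ext j
            simp
          omega
      _ = d * (m / d - 1) := by
          rw [Finset.sum_const, Finset.card_univ, Fintype.card_fin, smul_eq_mul]
      _ ≤ n - k := by
          obtain ⟨t, ht⟩ : ∃ t, m / d = t + 1 := ⟨m / d - 1, by omega⟩
          rw [ht] at hq2 ⊢
          have hmul : d * (t + 1) = d * t + d := by ring
          simp only [Nat.add_sub_cancel]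
          omega
  have hx := hcap x
  have hxcard : Set.ncard {i | x ∈ B i}
      = ((Finset.univ : Finset (Fin (n+1))).filter fun j => x ∈ B j).card := by
    rw [← Set.ncard_coe_finset]
    congr 1
    ext j
    simp
  have hsplit := Finset.card_filter_add_card_filter_not
    (s := (Finset.univ : Finset (Fin (n+1)))) (p := fun j => x ∈ B j)
  rw [Finset.card_univ, Fintype.card_fin] at hsplit
  omega

open scoped Classical in
lemma interPairs_remove {n : ℕ} {α : Type*} (B : Fin (n+1) → Set α) (v : Fin (n+1)) :
    interPairs B ≤ (n - (nonNbrSet B v).ncard) + interPairs (fun i => B (v.succAbove i)) := by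
  classical
  have hnn : (nonNbrSet B v).ncard
      = (Finset.univ.filter fun j : Fin (n+1) => j ≠ v ∧ ¬ (B j ∩ B v).Nonempty).card := by
    rw [← Set.ncard_coe_finset]
    congr 1
    ext j
    simp [nonNbrSet]
  have hdegnn : (Finset.univ.filter fun j : Fin (n+1) => j ≠ v ∧ (B j ∩ B v).Nonempty).card
      + (Finset.univ.filter fun j : Fin (n+1) => j ≠ v ∧ ¬ (B j ∩ B v).Nonempty).card = n := by
    have h := Finset.card_filter_add_card_filter_not
      (s := Finset.univ.filter fun j : Fin (n+1) => j ≠ v)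
      (p := fun j => (B j ∩ B v).Nonempty)
    rw [Finset.filter_filter, Finset.filter_filter, Finset.filter_ne',
      Finset.card_erase_of_mem (Finset.mem_univ v), Finset.card_univ, Fintype.card_fin] at h
    omega
  have hdeg : (Finset.univ.filter fun j : Fin (n+1) => j ≠ v ∧ (B j ∩ B v).Nonempty).card
      = n - (nonNbrSet B v).ncard := by omega
  rw [interPairs_eq_pairCount, interPairs_eq_pairCount, pairCount_eq_filter, pairCount_eq_filter,
    ← Finset.card_filter_add_card_filter_not
      (p := fun p : Fin (n+1) × Fin (n+1) => p.1 = v ∨ p.2 = v)]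
  apply Nat.add_le_add
  · -- pairs involving v
    rw [← hdeg]
    apply Finset.card_le_card_of_injOn (fun p => if p.1 = v then p.2 else p.1)
    · intro p hp
      simp only [Finset.mem_coe, Finset.mem_filter, Finset.mem_univ, true_and] at hp ⊢
      obtain ⟨⟨hlt, hne⟩, hor⟩ := hp
      by_cases h1 : p.1 = v
      · rw [if_pos h1]
        refine ⟨?_, ?_⟩
        · rw [← h1]
          exact (ne_of_lt hlt).symm
        · rw [Set.inter_comm, ← h1]
          exact hne
      · rw [if_neg h1]
        have h2 : p.2 = v := hor.resolve_left h1
        exact ⟨h1, by rw [← h2]; exact hne⟩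
    · intro p hp q hq hfeq
      simp only [Finset.mem_coe, Finset.mem_filter, Finset.mem_univ, true_and] at hp hq
      obtain ⟨⟨hltp, -⟩, horp⟩ := hp
      obtain ⟨⟨hltq, -⟩, horq⟩ := hq
      dsimp only at hfeq
      by_cases h1 : p.1 = v <;> by_cases h2 : q.1 = v
      · rw [if_pos h1, if_pos h2] at hfeq
        rw [Prod.ext_iff]
        exact ⟨h1.trans h2.symm, hfeq⟩
      · rw [if_pos h1, if_neg h2] at hfeq
        exfalso
        have hq2 : q.2 = v := horq.resolve_left h2
        rw [h1] at hltp
        rw [hq2] at hltq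
        rw [hfeq] at hltp
        exact absurd (hltq.trans hltp) (lt_irrefl _)
      · rw [if_neg h1, if_pos h2] at hfeq
        exfalso
        have hp2 : p.2 = v := horp.resolve_left h1
        rw [h2] at hltq
        rw [hp2] at hltp
        rw [← hfeq] at hltq
        exact absurd (hltp.trans hltq) (lt_irrefl _)
      · rw [if_neg h1, if_neg h2] at hfeq
        have hp2 : p.2 = v := horp.resolve_left h1
        have hq2 : q.2 = v := horq.resolve_left h2
        rw [Prod.ext_iff]
        exact ⟨hfeq, hp2.trans hq2.symm⟩
  · -- pairs not involving v
    calc ((Finset.univ.filter fun p : Fin (n+1) × Fin (n+1) =>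
            p.1 < p.2 ∧ (B p.1 ∩ B p.2).Nonempty).filter
              fun p => ¬ (p.1 = v ∨ p.2 = v)).card
        ≤ ((Finset.univ.filter fun q : Fin n × Fin n =>
            q.1 < q.2 ∧ (B (v.succAbove q.1) ∩ B (v.succAbove q.2)).Nonempty).image
              fun q => (v.succAbove q.1, v.succAbove q.2)).card := by
          apply Finset.card_le_card
          intro p hp
          simp only [Finset.mem_filter, Finset.mem_univ, true_and, not_or] at hp
          obtain ⟨⟨hlt, hne⟩, hv1, hv2⟩ := hp
          obtain ⟨q1, hq1⟩ := Fin.exists_succAbove_eq hv1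
          obtain ⟨q2, hq2⟩ := Fin.exists_succAbove_eq hv2
          rw [Finset.mem_image]
          refine ⟨(q1, q2), ?_, ?_⟩
          · simp only [Finset.mem_filter, Finset.mem_univ, true_and]
            constructor
            · rw [← Fin.succAbove_lt_succAbove_iff (p := v), hq1, hq2]
              exact hlt
            · rw [hq1, hq2]
              exact hne
          · rw [Prod.ext_iff]
            exact ⟨hq1, hq2⟩
      _ ≤ (Finset.univ.filter fun q : Fin n × Fin n =>
            q.1 < q.2 ∧ (B (v.succAbove q.1) ∩ B (v.succAbove q.2)).Nonempty).card :=
          Finset.card_image_le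

lemma main_bound (k d : ℕ) (hdk : d < k) (hd : 1 ≤ d) :
    ∀ n, k ≤ n → ∀ B : Fin n → Set (Fin d → ℝ), (∀ i, IsBox (B i)) →
      (∀ x : Fin d → ℝ, Set.ncard {i | x ∈ B i} ≤ k) →
      interPairs B + (n - k + d).choose 2 ≤ turanEdges (n - k + d) d + n.choose 2 := by
  intro n hkn
  induction n, hkn using Nat.le_induction with
  | base =>
    intro B hbox hcap
    have h1 : interPairs B ≤ k.choose 2 := by
      rw [interPairs_eq_pairCount, ← pairCount_ne k]
      exact pairCount_le_of_imp fun i j hij _ => ne_of_lt hij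
    have h2 : k - k + d = d := by omega
    rw [h2, turan_self]
    omega
  | succ n hkn ih =>
    intro B hbox hcap
    obtain ⟨v, hv⟩ := exists_low_degree hd hkn B hbox hcap
    have hbox' : ∀ i, IsBox ((fun i => B (v.succAbove i)) i) := fun i => hbox _
    have hcap' : ∀ x : Fin d → ℝ,
        Set.ncard {i | x ∈ (fun i => B (v.succAbove i)) i} ≤ k := by
      intro x
      have himg : Set.ncard {i | x ∈ (fun i => B (v.succAbove i)) i}
          = Set.ncard (v.succAbove '' {i | x ∈ (fun i => B (v.succAbove i)) i}) :=
        (Set.ncard_image_of_injective _ (Fin.succAbove_right_injective)).symm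
      rw [himg]
      refine le_trans (Set.ncard_le_ncard ?_ (Set.toFinite _)) (hcap x)
      rintro j ⟨i, hi, rfl⟩
      exact hi
    have hrem := interPairs_remove B v
    have hih := ih (fun i => B (v.succAbove i)) hbox' hcap'
    set m := n - k + d with hm
    set q := m / d with hq
    have hmd : d ≤ m := by omega
    have hqm : q ≤ m := Nat.div_le_self m d
    have hts := turan_succ m d (by omega)
    have hsucc1 : n + 1 - k + d = m + 1 := by omega
    rw [hsucc1]
    have hch1 : (m+1).choose 2 = m.choose 2 + m := by
      rw [Nat.choose_succ_succ m 1, Nat.choose_one_right]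
      norm_num
      omega
    have hch2 : (n+1).choose 2 = n.choose 2 + n := by
      rw [Nat.choose_succ_succ n 1, Nat.choose_one_right]
      norm_num
      omega
    omega


/-- For `n ≥ k > d ≥ 1`, every family of `n` axis-parallel boxes in `ℝ^d` with no `k+1`
boxes having a common point has at most `Ψ(n,k,d) = t(n-k+d, d) + (C(n,2) - C(n-k+d, 2))`
intersecting pairs. -/
theorem boxes_upper_bound (n k d : ℕ) (hkn : k ≤ n) (hdk : d < k) (hd : 1 ≤ d)
    (B : Fin n → Set (Fin d → ℝ)) (hbox : ∀ i, IsBox (B i))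
    (hcap : ∀ x : Fin d → ℝ, Set.ncard {i | x ∈ B i} ≤ k) :
    interPairs B ≤
      turanEdges (n - k + d) d + (Nat.choose n 2 - Nat.choose (n - k + d) 2) := by
  have h := main_bound k d hdk hd n hkn B hbox hcap
  have h2 : (n - k + d).choose 2 ≤ n.choose 2 := Nat.choose_le_choose 2 (by omega)
  omega
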